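/- Let (β_k) be positive reals with Σ β_k = ∞ and Σ β_k‖v_k‖² < ∞ for a sequence (v_k) in ℝ^d satisfying ‖v_{k+1} - v_k‖ ≤ M β_k for some M > 0 (Lipschitz-type increment bound). Then lim_{k→∞} ‖v_k‖ = 0. -/

import Mathlib

open scoped BigOperators

/-- Abstract sequence lemma: if `Σβ_k = ∞`, `Σβ_k‖v_k‖² < ∞`, and `‖v_{k+1}-v_k‖ ≤ Mβ_k`,
then `‖v_k‖ → 0`. -/
theorem abstract_sequence_lemma
    (d : ℕ) (v : ℕ → EuclideanSpace ℝ (Fin d)) (β : ℕ → ℝ) (M : ℝ)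
    (hβ : ∀ k, 0 < β k) (hM : 0 < M)
    (hdiv : Filter.Tendsto (fun n => ∑ j ∈ Finset.range n, β j) Filter.atTop Filter.atTop)
    (hsum : Summable (fun k => β k * ‖v k‖ ^ 2))
    (hinc : ∀ k, ‖v (k + 1) - v k‖ ≤ M * β k) :
    Filter.Tendsto (fun k => ‖v k‖) Filter.atTop (nhds 0) := by
  set a : ℕ → ℝ := fun k => ‖v k‖ with ha
  -- telescoping descent estimate
  have htel : ∀ m n : ℕ, m ≤ n → a m - a n ≤ ∑ i ∈ Finset.Ico m n, M * β i := by
    intro m n hmn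
    induction n, hmn using Nat.le_induction with
    | base => simp
    | succ n hmn ih =>
      have h1 : a n - a (n + 1) ≤ M * β n := by
        have := norm_sub_norm_le (v n) (v (n + 1))
        have h2 : ‖v n - v (n + 1)‖ = ‖v (n + 1) - v n‖ := norm_sub_rev _ _
        have := hinc n
        simp only [ha]
        linarith [norm_sub_norm_le (v n) (v (n + 1)), hinc n,
          (norm_sub_rev (v n) (v (n + 1)))]
      rw [Finset.sum_Ico_succ_top hmn]
      linarith
  by_contra hcon
  rw [Metric.tendsto_atTop] at hcon
  push_neg at hcon
  obtain ⟨ε, hε, hfreq⟩ := hcon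
  have hfreq' : ∀ N : ℕ, ∃ k ≥ N, ε ≤ a k := by
    intro N
    obtain ⟨k, hk, hd⟩ := hfreq N
    refine ⟨k, hk, ?_⟩
    have h0 : dist (a k) 0 = a k := by
      simp [ha, Real.dist_eq, abs_of_nonneg (norm_nonneg (v k))]
    rw [h0] at hd
    exact hd
  -- infinitely many indices with a n < ε/2
  have hlow : ∀ N : ℕ, ∃ n ≥ N, a n < ε / 2 := by
    intro N
    by_contra h
    push_neg at h
    -- partial sums of β * a² tend to atTop
    have hS : Filter.Tendsto (fun n => ∑ j ∈ Finset.range n, β j * ‖v j‖ ^ 2)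
        Filter.atTop Filter.atTop := by
      have hRHS : Filter.Tendsto
          (fun n => (ε / 2) ^ 2 * ((∑ j ∈ Finset.range n, β j) - ∑ j ∈ Finset.range N, β j))
          Filter.atTop Filter.atTop := by
        apply Filter.Tendsto.const_mul_atTop (by positivity)
        exact Filter.tendsto_atTop_add_const_right _ _ hdiv
      apply Filter.tendsto_atTop_mono' _ _ hRHS
      filter_upwards [Filter.eventually_ge_atTop N] with n hn
      have hsub : (∑ j ∈ Finset.range n, β j) - ∑ j ∈ Finset.range N, β j
          = ∑ j ∈ Finset.Ico N n, β j := (Finset.sum_Ico_eq_sub _ hn).symm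
      rw [hsub]
      calc (ε / 2) ^ 2 * ∑ j ∈ Finset.Ico N n, β j
          = ∑ j ∈ Finset.Ico N n, (ε / 2) ^ 2 * β j := Finset.mul_sum _ _ _
        _ ≤ ∑ j ∈ Finset.Ico N n, β j * ‖v j‖ ^ 2 := by
            apply Finset.sum_le_sum
            intro i hi
            rw [Finset.mem_Ico] at hi
            have hai := h i hi.1
            have : (ε / 2) ^ 2 ≤ ‖v i‖ ^ 2 :=
              pow_le_pow_left₀ (by positivity) hai 2
            rw [mul_comm]
            exact mul_le_mul_of_nonneg_left this (hβ i).le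
        _ ≤ ∑ j ∈ Finset.range n, β j * ‖v j‖ ^ 2 := by
            rw [Finset.range_eq_Ico]
            apply Finset.sum_le_sum_of_subset_of_nonneg
              (Finset.Ico_subset_Ico (Nat.zero_le _) le_rfl)
            intro i _ _
            exact mul_nonneg (hβ i).le (by positivity)
    exact not_tendsto_atTop_of_tendsto_nhds hsum.hasSum.tendsto_sum_nat hS
  -- Cauchy criterion for the summable series
  have hC : CauchySeq (fun n => ∑ j ∈ Finset.range n, β j * ‖v j‖ ^ 2) :=
    hsum.hasSum.tendsto_sum_nat.cauchySeq
  rw [Metric.cauchySeq_iff] at hC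
  set c : ℝ := (ε / 2) ^ 2 * (ε / (2 * M)) with hc
  have hcpos : 0 < c := by positivity
  obtain ⟨N, hN⟩ := hC c hcpos
  obtain ⟨m, hmN, hma⟩ := hfreq' N
  have hex : ∃ n, m < n ∧ a n < ε / 2 := by
    obtain ⟨n, hn, han⟩ := hlow (m + 1)
    exact ⟨n, hn, han⟩
  classical
  set n := Nat.find hex with hn
  obtain ⟨hmn, han⟩ := Nat.find_spec hex
  -- on [m, n), a i ≥ ε/2
  have hmid : ∀ i, m ≤ i → i < n → ε / 2 ≤ a i := by
    intro i hmi hin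
    rcases eq_or_lt_of_le hmi with rfl | hlt
    · linarith
    · by_contra hia
      push_neg at hia
      have h2 : n ≤ i := Nat.find_le ⟨hlt, hia⟩
      omega
  -- descent: Σ_{Ico m n} β ≥ ε/(2M)
  have hβsum : ε / (2 * M) ≤ ∑ i ∈ Finset.Ico m n, β i := by
    have h1 : a m - a n ≤ M * ∑ i ∈ Finset.Ico m n, β i := by
      have := htel m n hmn.le
      rw [Finset.mul_sum]
      exact this
    have h2 : ε / 2 ≤ a m - a n := by linarith
    rw [div_le_iff₀ (by positivity)]
    calc ε ≤ 2 * (a m - a n) := by linarith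
      _ ≤ 2 * (M * ∑ i ∈ Finset.Ico m n, β i) := by linarith
      _ = (∑ i ∈ Finset.Ico m n, β i) * (2 * M) := by ring
  -- so the block sum is ≥ c
  have hblock : c ≤ ∑ i ∈ Finset.Ico m n, β i * ‖v i‖ ^ 2 := by
    calc c = (ε / 2) ^ 2 * (ε / (2 * M)) := hc
      _ ≤ (ε / 2) ^ 2 * ∑ i ∈ Finset.Ico m n, β i :=
          mul_le_mul_of_nonneg_left hβsum (by positivity)
      _ = ∑ i ∈ Finset.Ico m n, (ε / 2) ^ 2 * β i := Finset.mul_sum _ _ _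
      _ ≤ ∑ i ∈ Finset.Ico m n, β i * ‖v i‖ ^ 2 := by
          apply Finset.sum_le_sum
          intro i hi
          rw [Finset.mem_Ico] at hi
          have hai := hmid i hi.1 hi.2
          have : (ε / 2) ^ 2 ≤ ‖v i‖ ^ 2 := pow_le_pow_left₀ (by positivity) hai 2
          rw [mul_comm]
          exact mul_le_mul_of_nonneg_left this (hβ i).le
  -- contradiction with Cauchy
  have hd := hN n (hmN.trans hmn.le) m hmN
  rw [Real.dist_eq] at hd
  have hsub : (∑ j ∈ Finset.range n, β j * ‖v j‖ ^ 2)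
      - ∑ j ∈ Finset.range m, β j * ‖v j‖ ^ 2
      = ∑ j ∈ Finset.Ico m n, β j * ‖v j‖ ^ 2 := (Finset.sum_Ico_eq_sub _ hmn.le).symm
  have : ∑ j ∈ Finset.Ico m n, β j * ‖v j‖ ^ 2 < c := by
    calc ∑ j ∈ Finset.Ico m n, β j * ‖v j‖ ^ 2
        = (∑ j ∈ Finset.range n, β j * ‖v j‖ ^ 2)
          - ∑ j ∈ Finset.range m, β j * ‖v j‖ ^ 2 := hsub.symm
      _ ≤ |(∑ j ∈ Finset.range n, β j * ‖v j‖ ^ 2)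
          - ∑ j ∈ Finset.range m, β j * ‖v j‖ ^ 2| := le_abs_self _
      _ < c := hd
  linarith
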